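/- For the three first-order differential operations grad, curl, div on ℝ³ (equivalently, for the composability digraph on {1,2,3} with an edge i→j iff j=i+1 or i+j=4), the number f(k) of meaningful k-th order compositions equals the (k+3)-rd Fibonacci number: f(k) = F_{k+3} for all k ≥ 1 (with F_1 = F_2 = 1). -/

import Mathlib

/-- Adjacency matrix of the composability digraph of the `n` first-order
differential operations `∇_1, …, ∇_n` on `ℝⁿ` (index `i : Fin n` represents
the operation `∇_{i+1}`): there is an edge `i → j` iff `j = i + 1` or
`i + j = n + 1` (in the 1-based indexing of the paper). -/
def adjA (n : ℕ) : Matrix (Fin n) (Fin n) ℤ :=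
  Matrix.of fun i j =>
    if (j : ℕ) = (i : ℕ) + 1 ∨ (i : ℕ) + (j : ℕ) + 2 = n + 1 then 1 else 0

/-- `fCount n k` is the number of meaningful `k`-th order compositions of the
differential operations on `ℝⁿ`, i.e. the number of sequences
`(i_1, …, i_k) ∈ {1, …, n}^k` each consecutive pair of which is composable. -/
def fCount (n k : ℕ) : ℕ :=
  (Finset.univ.filter fun s : Fin k → Fin n =>
    ∀ i j : Fin k, (j : ℕ) = (i : ℕ) + 1 → adjA n (s i) (s j) = 1).card

def valid (k : ℕ) (s : Fin k → Fin 3) : Prop :=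
  ∀ i j : Fin k, (j : ℕ) = (i : ℕ) + 1 → adjA 3 (s i) (s j) = 1

instance (k : ℕ) (s : Fin k → Fin 3) : Decidable (valid k s) := by
  unfold valid; infer_instance

def cnt (k : ℕ) (v : Fin 3) : ℕ :=
  (Finset.univ.filter fun s : Fin (k+1) → Fin 3 =>
    valid (k+1) s ∧ s (Fin.last k) = v).card

lemma fCount_succ (k : ℕ) :
    fCount 3 (k+1) = cnt k 0 + cnt k 1 + cnt k 2 := by
  unfold fCount cnt
  rw [Finset.card_eq_sum_card_fiberwise
    (f := fun s : Fin (k+1) → Fin 3 => s (Fin.last k)) (t := Finset.univ)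
    (fun _ _ => Finset.mem_univ _), Fin.sum_univ_three]
  simp [Finset.filter_filter, valid]
  rfl

lemma valid_snoc (k : ℕ) (s : Fin (k+1) → Fin 3) (x : Fin 3) :
    valid (k+2) (Fin.snoc s x) ↔ valid (k+1) s ∧ adjA 3 (s (Fin.last k)) x = 1 := by
  constructor
  · intro h
    refine ⟨fun i j hij => ?_, ?_⟩
    · have := h i.castSucc j.castSucc (by simpa using hij)
      simpa [Fin.snoc_castSucc] using this
    · have := h (Fin.last k).castSucc (Fin.last (k+1)) (by simp)
      simpa [Fin.snoc_castSucc, Fin.snoc_last] using this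
  · rintro ⟨h1, h2⟩ i j hij
    rcases lt_or_eq_of_le (Nat.lt_succ_iff.mp j.isLt) with hj | hj
    · have hi : (i : ℕ) < k + 1 := by omega
      have hii : i = Fin.castSucc ⟨i, hi⟩ := by ext; rfl
      have hjj : j = Fin.castSucc ⟨j, hj⟩ := by ext; rfl
      rw [hii, hjj, Fin.snoc_castSucc, Fin.snoc_castSucc]
      exact h1 _ _ hij
    · have hi : (i : ℕ) = k := by omega
      have hii : i = Fin.castSucc (Fin.last k) := by ext; simpa using hi
      have hjj : j = Fin.last (k+1) := by ext; simpa using hj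
      rw [hii, hjj, Fin.snoc_castSucc, Fin.snoc_last]
      exact h2

lemma cnt_succ (k : ℕ) (v : Fin 3) :
    cnt (k+1) v = (Finset.univ.filter fun s : Fin (k+1) → Fin 3 =>
      valid (k+1) s ∧ adjA 3 (s (Fin.last k)) v = 1).card := by
  unfold cnt
  refine Finset.card_nbij' (fun s => Fin.init s) (fun s => Fin.snoc s v) ?_ ?_ ?_ ?_
  · intro s hs
    simp only [Finset.mem_coe, Finset.mem_filter, Finset.mem_univ, true_and] at hs ⊢
    obtain ⟨h1, h2⟩ := hs
    have := (valid_snoc k (Fin.init s) (s (Fin.last (k+1)))).mp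
      (by rw [Fin.snoc_init_self]; exact h1)
    rw [h2] at this
    exact this
  · intro s hs
    simp only [Finset.mem_coe, Finset.mem_filter, Finset.mem_univ, true_and] at hs ⊢
    obtain ⟨h1, h2⟩ := hs
    exact ⟨(valid_snoc k s v).mpr ⟨h1, h2⟩, Fin.snoc_last _ _⟩
  · intro s hs
    simp only [Finset.mem_coe, Finset.mem_filter, Finset.mem_univ, true_and] at hs
    rw [← hs.2]
    exact Fin.snoc_init_self s
  · intro s hs
    simp

lemma cnt_succ_zero (k : ℕ) : cnt (k+1) 0 = cnt k 2 := by
  rw [cnt_succ]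
  unfold cnt
  congr 1
  apply Finset.filter_congr
  intro s _
  have : ∀ u : Fin 3, adjA 3 u 0 = 1 ↔ u = 2 := by decide
  simp [this]

lemma cnt_or (k : ℕ) (a b : Fin 3) (hab : a ≠ b) :
    (Finset.univ.filter fun s : Fin (k+1) → Fin 3 =>
      valid (k+1) s ∧ (s (Fin.last k) = a ∨ s (Fin.last k) = b)).card
      = cnt k a + cnt k b := by
  unfold cnt
  rw [← Finset.card_union_of_disjoint]
  · congr 1
    rw [← Finset.filter_or]
    apply Finset.filter_congr
    intro s _
    simp [and_or_left]
  · rw [Finset.disjoint_filter]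
    rintro s _ ⟨_, h2⟩ ⟨_, h2'⟩
    exact hab (h2 ▸ h2')

lemma cnt_succ_one (k : ℕ) : cnt (k+1) 1 = cnt k 0 + cnt k 1 := by
  rw [cnt_succ, ← cnt_or k 0 1 (by decide)]
  congr 1
  apply Finset.filter_congr
  intro s _
  have : ∀ u : Fin 3, adjA 3 u 1 = 1 ↔ u = 0 ∨ u = 1 := by decide
  simp [this]

lemma cnt_succ_two (k : ℕ) : cnt (k+1) 2 = cnt k 0 + cnt k 1 := by
  rw [cnt_succ, ← cnt_or k 0 1 (by decide)]
  congr 1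
  apply Finset.filter_congr
  intro s _
  have : ∀ u : Fin 3, adjA 3 u 2 = 1 ↔ u = 0 ∨ u = 1 := by decide
  simp [this]

lemma cnt_eq (k : ℕ) :
    cnt k 0 = Nat.fib (k+1) ∧ cnt k 1 = Nat.fib (k+2) ∧ cnt k 2 = Nat.fib (k+2) := by
  induction k with
  | zero => refine ⟨?_, ?_, ?_⟩ <;> decide
  | succ k ih =>
    obtain ⟨h0, h1, h2⟩ := ih
    refine ⟨?_, ?_, ?_⟩
    · rw [cnt_succ_zero, h2]
    · rw [cnt_succ_one, h0, h1]
      have := Nat.fib_add_two (n := k+1)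
      simp only [Nat.add_assoc] at this ⊢
      norm_num at this ⊢
      omega
    · rw [cnt_succ_two, h0, h1]
      have := Nat.fib_add_two (n := k+1)
      simp only [Nat.add_assoc] at this ⊢
      norm_num at this ⊢
      omega

/-- The number of meaningful `k`-th order compositions of grad, curl, div on
`ℝ³` equals the `(k+3)`-rd Fibonacci number (with `F_1 = F_2 = 1`). -/
theorem fCount_three_eq_fib (k : ℕ) (hk : 1 ≤ k) :
    fCount 3 k = Nat.fib (k + 3) := by
  obtain ⟨m, rfl⟩ := Nat.exists_eq_add_of_le hk
  rw [add_comm, fCount_succ]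
  obtain ⟨h0, h1, h2⟩ := cnt_eq m
  rw [h0, h1, h2]
  have e1 := Nat.fib_add_two (n := m+2)
  have e2 := Nat.fib_add_two (n := m+1)
  simp only [Nat.add_assoc] at e1 e2 ⊢
  norm_num at e1 e2 ⊢
  omega
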